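/- (Lemma 4.2, identity (E:R2)) Let (R, φ_R) be a radial ground state. Let ρ ∈ C²([0,∞); ℝ) with ρ'(0) = 0 and |ρ(ξ)| + |ρ'(ξ)| ≤ C·e^{−δξ} for some C, δ > 0, and let ψ ∈ C²([0,∞); ℝ) satisfy ψ''(ξ) + ((d−1)/ξ)·ψ'(ξ) = −R(ξ)^{2σ}·ρ(ξ) for ξ > 0, ψ'(0) = 0, ψ(ξ) → 0 as ξ → ∞ (ψ encodes (−Δ)^{-1}(R^{2σ}ρ)). Suppose ρ solves the linearized equation ρ''(ξ) + ((d−1)/ξ)·ρ'(ξ) − ρ(ξ) + 2σ·φ_R(ξ)·R(ξ)^{2σ−1}·ρ(ξ) + (2σ+1)·ψ(ξ)·R(ξ)^{2σ} = −(ξ²/4)·R(ξ) for all ξ > 0. Then ∫₀^∞ ( R(ξ)·ρ(ξ) − (ξ²/8)·R(ξ)² )·ξ^{d−1} dξ = 0. -/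

import Mathlib

open MeasureTheory Set Filter Topology

noncomputable section

/-- A radial ground state of the L²-critical generalized Hartree equation:
a positive radial solution `R` of `ΔR - R + ((-Δ)⁻¹ R^{2σ+1}) R^{2σ} = 0`,
written in radial coordinates, together with the potential `phi` encoding the
radial nonlocal term `(-Δ)⁻¹ R^{2σ+1}`, and assumed to decay exponentially. -/
structure RadialGroundState (d : ℕ) (σ : ℝ) where
  R : ℝ → ℝ
  phi : ℝ → ℝ
  smooth_R : ContDiffOn ℝ 2 R (Set.Ici 0)
  smooth_phi : ContDiffOn ℝ 2 phi (Set.Ici 0)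
  R_pos : ∀ ξ ≥ (0 : ℝ), 0 < R ξ
  R_deriv_zero : deriv R 0 = 0
  phi_eq : ∀ ξ > (0 : ℝ),
    deriv (deriv phi) ξ + ((d : ℝ) - 1) / ξ * deriv phi ξ = -(R ξ ^ (2 * σ + 1))
  phi_deriv_zero : deriv phi 0 = 0
  phi_lim : Filter.Tendsto phi Filter.atTop (nhds 0)
  R_eq : ∀ ξ > (0 : ℝ),
    deriv (deriv R) ξ + ((d : ℝ) - 1) / ξ * deriv R ξ - R ξ + phi ξ * R ξ ^ (2 * σ) = 0
  decay : ∃ C δ : ℝ, 0 < C ∧ 0 < δ ∧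
    ∀ ξ ≥ (0 : ℝ), |R ξ| + |deriv R ξ| ≤ C * Real.exp (-δ * ξ)

lemma aux_hasDerivAt {f : ℝ → ℝ} (hf : ContDiffOn ℝ 2 f (Set.Ici 0)) {ξ : ℝ} (hξ : 0 < ξ) :
    HasDerivAt f (deriv f ξ) ξ ∧ HasDerivAt (deriv f) (deriv (deriv f) ξ) ξ := by
  have h1 : Set.Ici (0:ℝ) ∈ 𝓝 ξ := Ici_mem_nhds hξ
  have h2 : ContDiffAt ℝ 2 f ξ := hf.contDiffAt h1
  obtain ⟨u, hu, hfu⟩ := h2.contDiffOn (le_refl 2) (by simp)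
  obtain ⟨t, hts, hto, hξt⟩ := mem_nhds_iff.1 hu
  have hft : ContDiffOn ℝ 2 f t := hfu.mono hts
  have := (contDiffOn_succ_iff_deriv_of_isOpen (n := 1) hto).1 (by exact_mod_cast hft)
  constructor
  · exact ((this.1 ξ hξt).differentiableAt (hto.mem_nhds hξt)).hasDerivAt
  · exact (((this.2.2.differentiableOn one_ne_zero) ξ hξt).differentiableAt
      (hto.mem_nhds hξt)).hasDerivAt

lemma aux_deriv_tendsto {f : ℝ → ℝ} (hf : ContDiffOn ℝ 2 f (Set.Ici 0)) :
    ∃ L, Filter.Tendsto (deriv f) (nhdsWithin 0 (Set.Ioi 0)) (nhds L) := by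
  have hcont : ContinuousOn (derivWithin f (Set.Ici 0)) (Set.Ici 0) :=
    hf.continuousOn_derivWithin (uniqueDiffOn_Ici 0) (by norm_num)
  refine ⟨derivWithin f (Set.Ici 0) 0, ?_⟩
  have h0 : Filter.Tendsto (derivWithin f (Set.Ici 0)) (nhdsWithin 0 (Set.Ioi 0))
      (nhds (derivWithin f (Set.Ici 0) 0)) :=
    (hcont 0 Set.self_mem_Ici).mono_left (nhdsWithin_mono _ Set.Ioi_subset_Ici_self)
  refine h0.congr' ?_
  filter_upwards [self_mem_nhdsWithin] with x hx
  exact (derivWithin_of_mem_nhds (Ici_mem_nhds hx))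

lemma aux_bdd {f : ℝ → ℝ} {L : ℝ} (hf : ContinuousOn f (Set.Ici 0))
    (h : Filter.Tendsto f Filter.atTop (nhds L)) :
    ∃ M, 0 ≤ M ∧ ∀ x ≥ (0:ℝ), |f x| ≤ M := by
  have h1 : ∀ᶠ x in Filter.atTop, |f x - L| ≤ 1 := by
    have h0 : Filter.Tendsto (fun x => f x - L) Filter.atTop (nhds 0) := by
      simpa using h.sub_const L
    have := Filter.Tendsto.eventually_mem h0 (Metric.ball_mem_nhds (0:ℝ) one_pos)
    filter_upwards [this] with x hx
    have : |f x - L| < 1 := by simpa [Real.dist_eq] using hx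
    linarith
  obtain ⟨A, hA⟩ := h1.exists_forall_of_atTop
  set A' := max A 0 with hA'
  have hcomp : IsCompact (Set.Icc (0:ℝ) A') := isCompact_Icc
  obtain ⟨M0, hM0⟩ := hcomp.exists_bound_of_continuousOn (hf.mono (fun x hx => hx.1))
  refine ⟨max M0 (|L| + 1), le_trans (abs_nonneg (f 0)) ?_, ?_⟩
  · exact le_max_of_le_left (by simpa using hM0 0 ⟨le_rfl, le_max_right A 0⟩)
  · intro x hx
    rcases le_or_gt x A' with hc | hc
    · exact le_max_of_le_left (by simpa using hM0 x ⟨hx, hc⟩)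
    · have := hA x (le_trans (le_max_left A 0) hc.le)
      have : |f x| ≤ |L| + 1 := by
        have := abs_sub_abs_le_abs_sub (f x) L
        linarith
      exact le_max_of_le_right this

lemma aux_int_exp (n : ℕ) {b : ℝ} (hb : 0 < b) :
    MeasureTheory.IntegrableOn (fun x : ℝ => x ^ n * Real.exp (-b * x)) (Set.Ioi 0) := by
  have := integrableOn_rpow_mul_exp_neg_mul_rpow (p := 1) (s := n)
    (by exact lt_of_lt_of_le (by norm_num) (Nat.cast_nonneg n) : (-1:ℝ) < n) one_pos hb
  refine this.congr_fun ?_ measurableSet_Ioi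
  intro x hx
  simp [Real.rpow_one, Real.rpow_natCast]

lemma aux_mul_zero {f g : ℝ → ℝ} {M : ℝ} (hf : Filter.Tendsto f Filter.atTop (nhds 0))
    (hg : ∀ᶠ ξ in Filter.atTop, |g ξ| ≤ M) :
    Filter.Tendsto (fun ξ => f ξ * g ξ) Filter.atTop (nhds 0) := by
  have h1 : Filter.Tendsto (fun ξ => |f ξ| * M) Filter.atTop (nhds 0) := by
    simpa using (hf.abs.mul_const M)
  refine squeeze_zero_norm' ?_ h1
  filter_upwards [hg] with x hx
  rw [Real.norm_eq_abs, abs_mul]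
  exact mul_le_mul_of_nonneg_left hx (abs_nonneg _)

lemma aux_tend0 {f : ℝ → ℝ} {C δ : ℝ} (hδ : 0 < δ) (m : ℕ)
    (h : ∀ᶠ ξ in Filter.atTop, |f ξ| ≤ C * (ξ ^ m * Real.exp (-δ * ξ))) :
    Filter.Tendsto f Filter.atTop (nhds 0) := by
  have h1 : Filter.Tendsto (fun ξ : ℝ => C * (ξ ^ (m:ℝ) * Real.exp (-δ * ξ)))
      Filter.atTop (nhds 0) := by
    simpa using (tendsto_rpow_mul_exp_neg_mul_atTop_nhds_zero m δ hδ).const_mul C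
  have h2 : Filter.Tendsto (fun ξ : ℝ => C * (ξ ^ m * Real.exp (-δ * ξ)))
      Filter.atTop (nhds 0) := by
    refine h1.congr' ?_
    filter_upwards [eventually_gt_atTop (0:ℝ)] with x hx
    rw [Real.rpow_natCast]
  refine squeeze_zero_norm' ?_ h2
  filter_upwards [h] with x hx
  simpa using hx

lemma aux_W_bound {W w g : ℝ → ℝ}
    (hW : ∀ x > (0:ℝ), HasDerivAt W (w x) x)
    (hw : ContinuousOn w (Set.Ioi 0))
    (hg : MeasureTheory.IntegrableOn g (Set.Ioi 0))
    (hb : ∀ x ∈ Set.Ioi (0:ℝ), |w x| ≤ g x) :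
    ∀ x ≥ (1:ℝ), |W x| ≤ |W 1| + ∫ t in Set.Ioi (0:ℝ), g t := by
  intro x hx
  have hsub : Set.uIcc (1:ℝ) x ⊆ Set.Ioi 0 := by
    rw [Set.uIcc_of_le hx]
    intro t ht; exact lt_of_lt_of_le one_pos ht.1
  have hInt : IntervalIntegrable w MeasureTheory.volume 1 x :=
    (hw.mono hsub).intervalIntegrable
  have hftc : ∫ t in (1:ℝ)..x, w t = W x - W 1 := by
    refine intervalIntegral.integral_eq_sub_of_hasDerivAt (fun t ht => ?_) hInt
    exact hW t (hsub ht)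
  have h1 : |W x| ≤ |W 1| + |∫ t in (1:ℝ)..x, w t| := by
    have : W x = W 1 + ∫ t in (1:ℝ)..x, w t := by rw [hftc]; ring
    rw [this]
    exact abs_add_le _ _
  have h2 : |∫ t in (1:ℝ)..x, w t| ≤ ∫ t in Set.Ioi (0:ℝ), g t := by
    have hIoc : Set.Ioc (1:ℝ) x ⊆ Set.Ioi 0 := fun t ht => lt_of_lt_of_le one_pos ht.1.le
    have e1 : |∫ t in (1:ℝ)..x, w t| ≤ ∫ t in (1:ℝ)..x, |w t| :=
      intervalIntegral.abs_integral_le_integral_abs hx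
    have e2 : ∫ t in (1:ℝ)..x, |w t| = ∫ t in Set.Ioc (1:ℝ) x, |w t| :=
      intervalIntegral.integral_of_le hx
    have e3 : ∫ t in Set.Ioc (1:ℝ) x, |w t| ≤ ∫ t in Set.Ioc (1:ℝ) x, g t := by
      refine MeasureTheory.setIntegral_mono_on ?_ (hg.mono_set hIoc) measurableSet_Ioc
        (fun t ht => hb t (hIoc ht))
      rw [intervalIntegrable_iff_integrableOn_Ioc_of_le hx] at hInt
      exact hInt.abs
    have e4 : ∫ t in Set.Ioc (1:ℝ) x, g t ≤ ∫ t in Set.Ioi (0:ℝ), g t := by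
      refine MeasureTheory.setIntegral_mono_set hg ?_ (Filter.Eventually.of_forall hIoc)
      filter_upwards [MeasureTheory.ae_restrict_mem measurableSet_Ioi] with t ht
      exact le_trans (abs_nonneg _) (hb t ht)
    linarith
  linarith

noncomputable def Ffun (d' σ : ℝ) (n : ℕ) (r p ρ ψ : ℝ → ℝ) : ℝ → ℝ := fun x =>
  x ^ n * (deriv ρ x * (d'/2 * r x + x * deriv r x)
      - ρ x * ((d'/2 + 1) * deriv r x + x * deriv (deriv r) x))
  + x ^ n * (deriv ψ x * (((2*σ+1)*(d'/2) - 2) * p x + x * deriv p x)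
      - ψ x * ((((2*σ+1)*(d'/2) - 2) + 1) * deriv p x + x * deriv (deriv p) x))
  + 1/8 * (x ^ n * (x ^ 3 * r x ^ 2))

set_option maxHeartbeats 2000000 in
lemma aux_key (d' σ : ℝ) (n : ℕ) (hσ0 : 0 < σ) (hσd : σ * d' = 2)
    (hn1 : 1 ≤ n) (hnd : (n:ℝ) = d' - 1)
    (r p ρ ψ : ℝ → ℝ)
    (hr : ContDiffOn ℝ 2 r (Set.Ici 0)) (hp : ContDiffOn ℝ 2 p (Set.Ici 0))
    (hq : ContDiffOn ℝ 2 ρ (Set.Ici 0)) (hs : ContDiffOn ℝ 2 ψ (Set.Ici 0))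
    (hrpos : ∀ x ≥ (0:ℝ), 0 < r x)
    (hre : ∀ x > (0:ℝ), deriv (deriv r) x + (d'-1)/x * deriv r x - r x + p x * r x ^ (2*σ) = 0)
    (hpe : ∀ x > (0:ℝ), deriv (deriv p) x + (d'-1)/x * deriv p x = -(r x ^ (2*σ+1)))
    (hψe : ∀ x > (0:ℝ), deriv (deriv ψ) x + (d'-1)/x * deriv ψ x = -(r x ^ (2*σ) * ρ x))
    (hle : ∀ x > (0:ℝ), deriv (deriv ρ) x + (d'-1)/x * deriv ρ x - ρ x
      + 2*σ*p x*r x^(2*σ-1)*ρ x + (2*σ+1)*ψ x*r x^(2*σ) = -(x^2/4)*r x)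
    {ξ : ℝ} (hξ : 0 < ξ) :
    HasDerivAt (Ffun d' σ n r p ρ ψ)
      (-2*((r ξ * ρ ξ - ξ^2/8*r ξ^2)*ξ^n)) ξ := by
  have hξ0 : ξ ≠ 0 := ne_of_gt hξ
  have hrne : r ξ ≠ 0 := ne_of_gt (hrpos ξ hξ.le)
  obtain ⟨hr1, hr2⟩ := aux_hasDerivAt hr hξ
  obtain ⟨hp1, hp2⟩ := aux_hasDerivAt hp hξ
  obtain ⟨hq1, hq2⟩ := aux_hasDerivAt hq hξ
  obtain ⟨hs1, hs2⟩ := aux_hasDerivAt hs hξ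
  have hQr0 : HasDerivAt (fun x => r x - p x * r x ^ (2*σ) - (d'-1) * (x⁻¹ * deriv r x))
      (deriv r ξ - (deriv p ξ * r ξ ^ (2*σ) + p ξ * (deriv r ξ * (2*σ) * r ξ ^ (2*σ-1)))
        - (d'-1) * (-(ξ^2)⁻¹ * deriv r ξ + ξ⁻¹ * deriv (deriv r) ξ)) ξ :=
    (hr1.sub (hp1.mul (hr1.rpow_const (Or.inl hrne)))).sub
      (((hasDerivAt_inv hξ0).mul hr2).const_mul (d'-1))
  have hQr : HasDerivAt (deriv (deriv r))
      (deriv r ξ - (deriv p ξ * r ξ ^ (2*σ) + p ξ * (deriv r ξ * (2*σ) * r ξ ^ (2*σ-1)))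
        - (d'-1) * (-(ξ^2)⁻¹ * deriv r ξ + ξ⁻¹ * deriv (deriv r) ξ)) ξ := by
    refine hQr0.congr_of_eventuallyEq ?_
    filter_upwards [Ioi_mem_nhds hξ] with x hx
    linear_combination (hre x hx)
  have hQp0 : HasDerivAt (fun x => -(r x ^ (2*σ+1)) - (d'-1) * (x⁻¹ * deriv p x))
      (-(deriv r ξ * (2*σ+1) * r ξ ^ (2*σ+1-1))
        - (d'-1) * (-(ξ^2)⁻¹ * deriv p ξ + ξ⁻¹ * deriv (deriv p) ξ)) ξ :=
    ((hr1.rpow_const (Or.inl hrne)).neg).sub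
      (((hasDerivAt_inv hξ0).mul hp2).const_mul (d'-1))
  have hQp : HasDerivAt (deriv (deriv p))
      (-(deriv r ξ * (2*σ+1) * r ξ ^ (2*σ+1-1))
        - (d'-1) * (-(ξ^2)⁻¹ * deriv p ξ + ξ⁻¹ * deriv (deriv p) ξ)) ξ := by
    refine hQp0.congr_of_eventuallyEq ?_
    filter_upwards [Ioi_mem_nhds hξ] with x hx
    linear_combination (hpe x hx)
  have hΛ : HasDerivAt (fun x => d'/2 * r x + x * deriv r x)
      (d'/2 * deriv r ξ + (1 * deriv r ξ + ξ * deriv (deriv r) ξ)) ξ :=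
    (hr1.const_mul (d'/2)).add ((hasDerivAt_id ξ).mul hr2)
  have hΛ1 : HasDerivAt (fun x => (d'/2 + 1) * deriv r x + x * deriv (deriv r) x)
      ((d'/2 + 1) * deriv (deriv r) ξ
        + (1 * deriv (deriv r) ξ + ξ * (deriv r ξ - (deriv p ξ * r ξ ^ (2*σ)
            + p ξ * (deriv r ξ * (2*σ) * r ξ ^ (2*σ-1)))
          - (d'-1) * (-(ξ^2)⁻¹ * deriv r ξ + ξ⁻¹ * deriv (deriv r) ξ)))) ξ :=
    (hr2.const_mul (d'/2+1)).add ((hasDerivAt_id ξ).mul hQr)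
  have hh : HasDerivAt (fun x => ((2*σ+1)*(d'/2) - 2) * p x + x * deriv p x)
      (((2*σ+1)*(d'/2) - 2) * deriv p ξ + (1 * deriv p ξ + ξ * deriv (deriv p) ξ)) ξ :=
    (hp1.const_mul _).add ((hasDerivAt_id ξ).mul hp2)
  have hh1 : HasDerivAt (fun x => (((2*σ+1)*(d'/2) - 2) + 1) * deriv p x + x * deriv (deriv p) x)
      ((((2*σ+1)*(d'/2) - 2) + 1) * deriv (deriv p) ξ
        + (1 * deriv (deriv p) ξ + ξ * (-(deriv r ξ * (2*σ+1) * r ξ ^ (2*σ+1-1))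
          - (d'-1) * (-(ξ^2)⁻¹ * deriv p ξ + ξ⁻¹ * deriv (deriv p) ξ)))) ξ :=
    (hp2.const_mul _).add ((hasDerivAt_id ξ).mul hQp)
  have H := ((((hasDerivAt_pow n ξ).mul ((hq2.mul hΛ).sub (hq1.mul hΛ1)))).add
      (((hasDerivAt_pow n ξ).mul ((hs2.mul hh).sub (hs1.mul hh1))))).add
      ((((hasDerivAt_pow n ξ).mul ((hasDerivAt_pow 3 ξ).mul (hr1.pow 2))).const_mul (1/8)))
  refine HasDerivAt.congr_deriv (H.congr_of_eventuallyEq ?_) ?_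
  · filter_upwards with x
    rfl
  · have hpos := hrpos ξ hξ.le
    have hbase : r ξ ^ ((2*σ-1)+1) = r ξ ^ (2*σ-1) * r ξ := by
      rw [Real.rpow_add hpos, Real.rpow_one]
    have hA : r ξ ^ (2*σ) = r ξ ^ (2*σ-1) * r ξ := by
      rw [← hbase]; congr 1; ring
    have hA2 : r ξ ^ (2*σ+1) = r ξ ^ (2*σ-1) * r ξ * r ξ := by
      have h2 : r ξ ^ (((2*σ-1)+1)+1) = r ξ ^ ((2*σ-1)+1) * r ξ := by
        rw [Real.rpow_add hpos, Real.rpow_one]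
      rw [← hbase, ← h2]; congr 1; ring
    have hA0 : r ξ ^ (2*σ+1-1) = r ξ ^ (2*σ-1) * r ξ := by
      rw [← hbase]; congr 1; ring
    have e1 : deriv (deriv r) ξ
        = r ξ - p ξ * (r ξ^(2*σ-1) * r ξ) - (d'-1)/ξ * deriv r ξ := by
      have h := hre ξ hξ; rw [hA] at h; linear_combination h
    have e2 : deriv (deriv p) ξ
        = -(r ξ^(2*σ-1) * r ξ * r ξ) - (d'-1)/ξ * deriv p ξ := by
      have h := hpe ξ hξ; rw [hA2] at h; linear_combination h
    have e3 : deriv (deriv ψ) ξ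
        = -(r ξ^(2*σ-1) * r ξ * ρ ξ) - (d'-1)/ξ * deriv ψ ξ := by
      have h := hψe ξ hξ; rw [hA] at h; linear_combination h
    have e4 : deriv (deriv ρ) ξ
        = ρ ξ - 2*σ*p ξ*(r ξ^(2*σ-1))*ρ ξ - (2*σ+1)*ψ ξ*(r ξ^(2*σ-1)*r ξ)
          - ξ^2/4*r ξ - (d'-1)/ξ*deriv ρ ξ := by
      have h := hle ξ hξ; rw [hA] at h; linear_combination h
    have hxn : ξ^n = ξ^(n-1)*ξ := by
      rw [← pow_succ, Nat.sub_add_cancel hn1]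
    have hd' : d' = 2/σ := by rw [eq_div_iff hσ0.ne']; linarith
    simp only [Pi.mul_apply, Pi.sub_apply, Pi.add_apply, Pi.pow_apply, Pi.neg_apply]
    rw [hA0, hA, e1, e2, e3, e4, hnd, hxn, hd']
    push_cast
    field_simp
    ring

set_option maxHeartbeats 4000000 in
/-- Lemma 4.2, identity (E:R2). -/
theorem groundState_identity_rho
    (d : ℕ) (σ : ℝ) (hd : 3 ≤ d) (hσ : σ = 2 / (d : ℝ))
    (G : RadialGroundState d σ)
    (ρ ψ : ℝ → ℝ)
    (hρ : ContDiffOn ℝ 2 ρ (Set.Ici 0)) (hρ0 : deriv ρ 0 = 0)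
    (hρdecay : ∃ C δ : ℝ, 0 < C ∧ 0 < δ ∧
      ∀ ξ ≥ (0 : ℝ), |ρ ξ| + |deriv ρ ξ| ≤ C * Real.exp (-δ * ξ))
    (hψ : ContDiffOn ℝ 2 ψ (Set.Ici 0))
    (hψeq : ∀ ξ > (0 : ℝ),
      deriv (deriv ψ) ξ + ((d : ℝ) - 1) / ξ * deriv ψ ξ = -(G.R ξ ^ (2 * σ) * ρ ξ))
    (hψ0 : deriv ψ 0 = 0)
    (hψlim : Filter.Tendsto ψ Filter.atTop (nhds 0))
    (hlin : ∀ ξ > (0 : ℝ),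
      deriv (deriv ρ) ξ + ((d : ℝ) - 1) / ξ * deriv ρ ξ - ρ ξ
        + 2 * σ * G.phi ξ * G.R ξ ^ (2 * σ - 1) * ρ ξ
        + (2 * σ + 1) * ψ ξ * G.R ξ ^ (2 * σ) = -(ξ ^ 2 / 4) * G.R ξ) :
    ∫ ξ in Set.Ioi (0 : ℝ),
        (G.R ξ * ρ ξ - ξ ^ 2 / 8 * G.R ξ ^ 2) * ξ ^ (d - 1) = 0 := by
  have hd3 : (3:ℝ) ≤ (d:ℝ) := by exact_mod_cast hd
  have hσ0 : 0 < σ := by rw [hσ]; positivity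
  have hσd : σ * (d:ℝ) = 2 := by rw [hσ]; field_simp
  have hn1 : 1 ≤ d - 1 := by omega
  have hn0 : d - 1 ≠ 0 := by omega
  have hnd : ((d - 1 : ℕ):ℝ) = (d:ℝ) - 1 := by
    push_cast [Nat.cast_sub (by omega : 1 ≤ d)]; ring
  -- the master function and its derivative
  set F : ℝ → ℝ := Ffun (d:ℝ) σ (d-1) G.R G.phi ρ ψ with hFdef
  have hFderiv : ∀ x ∈ Set.Ioi (0:ℝ), HasDerivAt F
      (-2*((G.R x * ρ x - x^2/8*G.R x^2)*x^(d-1))) x :=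
    fun x hx => aux_key (d:ℝ) σ (d-1) hσ0 hσd hn1 hnd G.R G.phi ρ ψ
      G.smooth_R G.smooth_phi hρ hψ G.R_pos G.R_eq G.phi_eq hψeq hlin hx
  obtain ⟨C1, δ1, hC1, hδ1, hdec1⟩ := G.decay
  obtain ⟨C2, δ2, hC2, hδ2, hdec2⟩ := hρdecay
  have hRb : ∀ x ≥ (0:ℝ), |G.R x| ≤ C1 * Real.exp (-δ1 * x) := by
    intro x hx; have h := hdec1 x hx; have := abs_nonneg (deriv G.R x); linarith
  have hRb' : ∀ x ≥ (0:ℝ), |deriv G.R x| ≤ C1 * Real.exp (-δ1 * x) := by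
    intro x hx; have h := hdec1 x hx; have := abs_nonneg (G.R x); linarith
  have hρb : ∀ x ≥ (0:ℝ), |ρ x| ≤ C2 * Real.exp (-δ2 * x) := by
    intro x hx; have h := hdec2 x hx; have := abs_nonneg (deriv ρ x); linarith
  have hρb' : ∀ x ≥ (0:ℝ), |deriv ρ x| ≤ C2 * Real.exp (-δ2 * x) := by
    intro x hx; have h := hdec2 x hx; have := abs_nonneg (ρ x); linarith
  have hRcont : ContinuousOn G.R (Set.Ici 0) := G.smooth_R.continuousOn
  have hpcont : ContinuousOn G.phi (Set.Ici 0) := G.smooth_phi.continuousOn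
  have hρcont : ContinuousOn ρ (Set.Ici 0) := hρ.continuousOn
  have hψcont : ContinuousOn ψ (Set.Ici 0) := hψ.continuousOn
  have hexp1 : ∀ x ≥ (0:ℝ), Real.exp (-δ2 * x) ≤ 1 := by
    intro x hx
    rw [Real.exp_le_one_iff]
    nlinarith
  have hRsq : ∀ x ≥ (0:ℝ), G.R x ^ 2 ≤ C1^2 * Real.exp (-δ1 * x) := by
    intro x hx
    have h1 := hRb x hx
    have h2 : Real.exp (-δ1 * x) ≤ 1 := by rw [Real.exp_le_one_iff]; nlinarith
    have h3 : G.R x ^ 2 = |G.R x|^2 := (sq_abs _).symm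
    have h4 : |G.R x|^2 ≤ (C1 * Real.exp (-δ1*x))^2 := by
      apply pow_le_pow_left₀ (abs_nonneg _) h1
    have h5 : (C1 * Real.exp (-δ1*x))^2 = C1^2 * (Real.exp (-δ1*x) * Real.exp (-δ1*x)) := by
      ring
    nlinarith [Real.exp_pos (-δ1*x), sq_nonneg C1]
  have hFint : MeasureTheory.IntegrableOn
      (fun x => -2*((G.R x * ρ x - x^2/8*G.R x^2)*x^(d-1))) (Set.Ioi 0) := by
    have hg : MeasureTheory.IntegrableOn (fun x : ℝ =>
        (2*C1*C2) * (x^(d-1) * Real.exp (-δ1*x)) + (C1^2/4) * (x^(d+1) * Real.exp (-δ1*x)))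
        (Set.Ioi 0) :=
      ((aux_int_exp (d-1) hδ1).const_mul _).add ((aux_int_exp (d+1) hδ1).const_mul _)
    refine MeasureTheory.Integrable.mono' hg ?_ ?_
    · refine (ContinuousOn.aestronglyMeasurable ?_ measurableSet_Ioi)
      refine (ContinuousOn.mul continuousOn_const ?_)
      refine (ContinuousOn.mul (ContinuousOn.sub ?_ ?_) (continuous_pow _).continuousOn)
      · exact ((hRcont.mono Set.Ioi_subset_Ici_self).mul (hρcont.mono Set.Ioi_subset_Ici_self))
      · exact (((continuous_pow 2).continuousOn.div_const 8).mul
          ((hRcont.mono Set.Ioi_subset_Ici_self).pow 2))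
    · filter_upwards [MeasureTheory.ae_restrict_mem measurableSet_Ioi] with x hx
      have hx0 : (0:ℝ) ≤ x := (le_of_lt hx)
      have h1 := hRb x hx0
      have h2 := hρb x hx0
      have h3 := hRsq x hx0
      have h4 : |G.R x * ρ x| ≤ C1*C2*Real.exp (-δ1*x) := by
        rw [abs_mul]
        calc |G.R x| * |ρ x| ≤ (C1 * Real.exp (-δ1*x)) * (C2 * Real.exp (-δ2*x)) := by
              apply mul_le_mul h1 h2 (abs_nonneg _) (by positivity)
          _ ≤ (C1 * Real.exp (-δ1*x)) * (C2 * 1) := by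
              have := hexp1 x hx0
              gcongr
          _ = C1*C2*Real.exp (-δ1*x) := by ring
      have hxp : x^(d-1) * x^2 = x^(d+1) := by
        rw [← pow_add]; congr 1; omega
      have hpn : (0:ℝ) ≤ x^(d-1) := pow_nonneg hx0 _
      rw [Real.norm_eq_abs]
      calc |(-2*((G.R x * ρ x - x^2/8*G.R x^2)*x^(d-1)))|
          = 2 * (|G.R x * ρ x - x^2/8*G.R x^2| * x^(d-1)) := by
            rw [abs_mul, abs_mul, abs_of_nonneg hpn]
            norm_num
        _ ≤ 2 * ((|G.R x * ρ x| + x^2/8*G.R x^2) * x^(d-1)) := by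
            have hb : |G.R x * ρ x - x^2/8*G.R x^2| ≤ |G.R x * ρ x| + x^2/8*G.R x^2 := by
              refine (abs_sub _ _).trans ?_
              have : |x^2/8*G.R x^2| = x^2/8*G.R x^2 := abs_of_nonneg (by positivity)
              rw [this]
            gcongr
        _ ≤ 2 * ((C1*C2*Real.exp (-δ1*x) + x^2/8*(C1^2 * Real.exp (-δ1*x))) * x^(d-1)) := by
            have : x^2/8*G.R x^2 ≤ x^2/8*(C1^2 * Real.exp (-δ1*x)) := by
              apply mul_le_mul_of_nonneg_left h3 (by positivity)
            gcongr
        _ = (2*C1*C2) * (x^(d-1) * Real.exp (-δ1*x))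
            + (C1^2/4) * ((x^(d-1)*x^2) * Real.exp (-δ1*x)) := by ring
        _ = (2*C1*C2) * (x^(d-1) * Real.exp (-δ1*x))
            + (C1^2/4) * (x^(d+1) * Real.exp (-δ1*x)) := by rw [hxp]
  have hF0 : F 0 = 0 := by
    simp [hFdef, Ffun, zero_pow hn0]
  have hXR2eq : ∀ x > (0:ℝ), x * deriv (deriv G.R) x
      = x * G.R x - x * (G.phi x * G.R x ^ (2*σ)) - ((d:ℝ)-1) * deriv G.R x := by
    intro x hx
    have h := G.R_eq x hx
    have hx0 : x ≠ 0 := ne_of_gt hx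
    have hinv : x * x⁻¹ = 1 := mul_inv_cancel₀ hx0
    linear_combination x * h - (((d:ℝ)-1) * deriv G.R x) * hinv
  have hXP2eq : ∀ x > (0:ℝ), x * deriv (deriv G.phi) x
      = -(x * G.R x ^ (2*σ+1)) - ((d:ℝ)-1) * deriv G.phi x := by
    intro x hx
    have h := G.phi_eq x hx
    have hx0 : x ≠ 0 := ne_of_gt hx
    have hinv : x * x⁻¹ = 1 := mul_inv_cancel₀ hx0
    linear_combination x * h - (((d:ℝ)-1) * deriv G.phi x) * hinv
  obtain ⟨Lr, hLr⟩ := aux_deriv_tendsto G.smooth_R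
  obtain ⟨Lp, hLp⟩ := aux_deriv_tendsto G.smooth_phi
  obtain ⟨Lq, hLq⟩ := aux_deriv_tendsto hρ
  obtain ⟨Ls, hLs⟩ := aux_deriv_tendsto hψ
  have tR : Filter.Tendsto G.R (nhdsWithin 0 (Set.Ioi 0)) (nhds (G.R 0)) :=
    (hRcont 0 Set.self_mem_Ici).mono_left (nhdsWithin_mono _ Set.Ioi_subset_Ici_self)
  have tp : Filter.Tendsto G.phi (nhdsWithin 0 (Set.Ioi 0)) (nhds (G.phi 0)) :=
    (hpcont 0 Set.self_mem_Ici).mono_left (nhdsWithin_mono _ Set.Ioi_subset_Ici_self)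
  have tq : Filter.Tendsto ρ (nhdsWithin 0 (Set.Ioi 0)) (nhds (ρ 0)) :=
    (hρcont 0 Set.self_mem_Ici).mono_left (nhdsWithin_mono _ Set.Ioi_subset_Ici_self)
  have ts : Filter.Tendsto ψ (nhdsWithin 0 (Set.Ioi 0)) (nhds (ψ 0)) :=
    (hψcont 0 Set.self_mem_Ici).mono_left (nhdsWithin_mono _ Set.Ioi_subset_Ici_self)
  have tid : Filter.Tendsto (fun x : ℝ => x) (nhdsWithin 0 (Set.Ioi 0)) (nhds 0) :=
    (continuous_id.tendsto 0).mono_left nhdsWithin_le_nhds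
  have trpow : Filter.Tendsto (fun x => G.R x ^ (2*σ)) (nhdsWithin 0 (Set.Ioi 0))
      (nhds (G.R 0 ^ (2*σ))) := tR.rpow_const (Or.inr (by positivity))
  have trpow1 : Filter.Tendsto (fun x => G.R x ^ (2*σ+1)) (nhdsWithin 0 (Set.Ioi 0))
      (nhds (G.R 0 ^ (2*σ+1))) := tR.rpow_const (Or.inr (by positivity))
  have tXR2 : Filter.Tendsto (fun x => x * deriv (deriv G.R) x) (nhdsWithin 0 (Set.Ioi 0))
      (nhds (0 * G.R 0 - 0 * (G.phi 0 * G.R 0 ^ (2*σ)) - ((d:ℝ)-1) * Lr)) := by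
    refine Filter.Tendsto.congr' ?_ (((tid.mul tR).sub (tid.mul (tp.mul trpow))).sub
      (hLr.const_mul (((d:ℝ)-1))))
    filter_upwards [self_mem_nhdsWithin] with x hx
    linear_combination -(hXR2eq x hx)
  have tXP2 : Filter.Tendsto (fun x => x * deriv (deriv G.phi) x) (nhdsWithin 0 (Set.Ioi 0))
      (nhds (-(0 * G.R 0 ^ (2*σ+1)) - ((d:ℝ)-1) * Lp)) := by
    refine Filter.Tendsto.congr' ?_ (((tid.mul trpow1).neg).sub (hLp.const_mul (((d:ℝ)-1))))
    filter_upwards [self_mem_nhdsWithin] with x hx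
    linear_combination -(hXP2eq x hx)
  have tpown : Filter.Tendsto (fun x : ℝ => x^(d-1)) (nhdsWithin 0 (Set.Ioi 0)) (nhds 0) := by
    have := ((continuous_pow (d-1)).tendsto (0:ℝ)).mono_left
      (nhdsWithin_le_nhds (s := Set.Ioi (0:ℝ)))
    simpa [zero_pow hn0] using this
  have tpow3 : Filter.Tendsto (fun x : ℝ => x^3) (nhdsWithin 0 (Set.Ioi 0)) (nhds 0) := by
    have := ((continuous_pow 3).tendsto (0:ℝ)).mono_left
      (nhdsWithin_le_nhds (s := Set.Ioi (0:ℝ)))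
    simpa using this
  have hFcont : ContinuousWithinAt F (Set.Ici 0) 0 := by
    rw [← Set.Ioi_insert, continuousWithinAt_insert_self]
    unfold ContinuousWithinAt
    rw [hF0]
    have t1 := (hLq.mul ((tR.const_mul ((d:ℝ)/2)).add (tid.mul hLr))).sub
      (tq.mul ((hLr.const_mul ((d:ℝ)/2+1)).add tXR2))
    have t2 := (hLs.mul ((tp.const_mul ((2*σ+1)*((d:ℝ)/2) - 2)).add (tid.mul hLp))).sub
      (ts.mul ((hLp.const_mul (((2*σ+1)*((d:ℝ)/2) - 2) + 1)).add tXP2))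
    have t3 := (tpown.mul ((tpow3.mul (tR.pow 2)))).const_mul (1/8 : ℝ)
    have tfin := ((tpown.mul t1).add (tpown.mul t2)).add t3
    simp only [hFdef, Ffun]
    convert tfin using 2
    · rfl
    ring
  -- bound on ψ'' equation
  have hXS2eq : ∀ x > (0:ℝ), x * deriv (deriv ψ) x
      = -(x * (G.R x ^ (2*σ) * ρ x)) - ((d:ℝ)-1) * deriv ψ x := by
    intro x hx
    have h := hψeq x hx
    have hinv : x * x⁻¹ = 1 := mul_inv_cancel₀ (ne_of_gt hx)
    linear_combination x * h - (((d:ℝ)-1) * deriv ψ x) * hinv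
  obtain ⟨Mp, hMp0, hMpb⟩ := aux_bdd hpcont G.phi_lim
  obtain ⟨Mψ, hMψ0, hMψb⟩ := aux_bdd hψcont hψlim
  have hRpow : ∀ c : ℝ, 0 ≤ c → ∀ x ≥ (0:ℝ), G.R x ^ c ≤ C1 ^ c * Real.exp (-(c*δ1) * x) := by
    intro c hc x hx
    have h1 : G.R x ≤ C1 * Real.exp (-δ1*x) := le_trans (le_abs_self _) (hRb x hx)
    calc G.R x ^ c ≤ (C1 * Real.exp (-δ1*x)) ^ c :=
          Real.rpow_le_rpow (G.R_pos x hx).le h1 hc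
      _ = C1 ^ c * (Real.exp (-δ1*x)) ^ c := Real.mul_rpow hC1.le (Real.exp_nonneg _)
      _ = C1 ^ c * Real.exp (-(c*δ1)*x) := by
          rw [← Real.exp_mul]
          congr 1
          ring
  -- FTC bounds for x^(d-1) * deriv phi and x^(d-1) * deriv ψ
  have hWp : ∀ x > (0:ℝ), HasDerivAt (fun y => y^(d-1) * deriv G.phi y)
      (-(x^(d-1) * G.R x ^ (2*σ+1))) x := by
    intro x hx
    obtain ⟨hp1, hp2⟩ := aux_hasDerivAt G.smooth_phi hx
    refine ((hasDerivAt_pow (d-1) x).mul hp2).congr_deriv ?_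
    have e := hXP2eq x hx
    have hxn : x^(d-1-1) * x = x^(d-1) := by
      rw [← pow_succ]; congr 1; omega
    rw [hnd, ← hxn]
    linear_combination x^(d-1-1) * e
  have hWψ : ∀ x > (0:ℝ), HasDerivAt (fun y => y^(d-1) * deriv ψ y)
      (-(x^(d-1) * (G.R x ^ (2*σ) * ρ x))) x := by
    intro x hx
    obtain ⟨hs1, hs2⟩ := aux_hasDerivAt hψ hx
    refine ((hasDerivAt_pow (d-1) x).mul hs2).congr_deriv ?_
    have e := hXS2eq x hx
    have hxn : x^(d-1-1) * x = x^(d-1) := by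
      rw [← pow_succ]; congr 1; omega
    rw [hnd, ← hxn]
    linear_combination x^(d-1-1) * e
  have hwpc : ContinuousOn (fun x : ℝ => -(x^(d-1) * G.R x ^ (2*σ+1))) (Set.Ioi 0) :=
    (((continuous_pow (d-1)).continuousOn.mul
      ((hRcont.mono Set.Ioi_subset_Ici_self).rpow_const
        (fun x hx => Or.inl (ne_of_gt (G.R_pos x (le_of_lt hx)))))).neg)
  have hwψc : ContinuousOn (fun x : ℝ => -(x^(d-1) * (G.R x ^ (2*σ) * ρ x))) (Set.Ioi 0) :=
    (((continuous_pow (d-1)).continuousOn.mul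
      (((hRcont.mono Set.Ioi_subset_Ici_self).rpow_const
        (fun x hx => Or.inl (ne_of_gt (G.R_pos x (le_of_lt hx))))).mul
        (hρcont.mono Set.Ioi_subset_Ici_self))).neg)
  have hgp : MeasureTheory.IntegrableOn (fun x : ℝ =>
      C1^(2*σ+1) * (x^(d-1) * Real.exp (-((2*σ+1)*δ1)*x))) (Set.Ioi 0) :=
    (aux_int_exp (d-1) (by positivity)).const_mul _
  have hgψ : MeasureTheory.IntegrableOn (fun x : ℝ =>
      (C1^(2*σ)*C2) * (x^(d-1) * Real.exp (-((2*σ)*δ1)*x))) (Set.Ioi 0) :=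
    (aux_int_exp (d-1) (by positivity)).const_mul _
  have hbp : ∀ x ∈ Set.Ioi (0:ℝ), |(-(x^(d-1) * G.R x ^ (2*σ+1)))|
      ≤ C1^(2*σ+1) * (x^(d-1) * Real.exp (-((2*σ+1)*δ1)*x)) := by
    intro x hx
    have hx0 : (0:ℝ) ≤ x := le_of_lt hx
    rw [abs_neg, abs_mul, abs_of_nonneg (pow_nonneg hx0 _),
      abs_of_nonneg (Real.rpow_nonneg (G.R_pos x hx0).le _)]
    have h := hRpow (2*σ+1) (by positivity) x hx0
    calc x^(d-1) * G.R x ^ (2*σ+1)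
        ≤ x^(d-1) * (C1^(2*σ+1) * Real.exp (-((2*σ+1)*δ1)*x)) := by
          exact mul_le_mul_of_nonneg_left h (pow_nonneg hx0 _)
      _ = C1^(2*σ+1) * (x^(d-1) * Real.exp (-((2*σ+1)*δ1)*x)) := by ring
  have hbψ : ∀ x ∈ Set.Ioi (0:ℝ), |(-(x^(d-1) * (G.R x ^ (2*σ) * ρ x)))|
      ≤ (C1^(2*σ)*C2) * (x^(d-1) * Real.exp (-((2*σ)*δ1)*x)) := by
    intro x hx
    have hx0 : (0:ℝ) ≤ x := le_of_lt hx
    rw [abs_neg, abs_mul, abs_of_nonneg (pow_nonneg hx0 _), abs_mul,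
      abs_of_nonneg (Real.rpow_nonneg (G.R_pos x hx0).le _)]
    have h := hRpow (2*σ) (by positivity) x hx0
    have h2 := hρb x hx0
    have h3 := hexp1 x hx0
    calc x^(d-1) * (G.R x ^ (2*σ) * |ρ x|)
        ≤ x^(d-1) * ((C1^(2*σ) * Real.exp (-((2*σ)*δ1)*x)) * (C2 * Real.exp (-δ2*x))) := by
          refine mul_le_mul_of_nonneg_left ?_ (pow_nonneg hx0 _)
          exact mul_le_mul h h2 (abs_nonneg _) (by positivity)
      _ ≤ x^(d-1) * ((C1^(2*σ) * Real.exp (-((2*σ)*δ1)*x)) * (C2 * 1)) := by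
          have hp0 : (0:ℝ) ≤ x^(d-1) := pow_nonneg hx0 _
          gcongr
      _ = (C1^(2*σ)*C2) * (x^(d-1) * Real.exp (-((2*σ)*δ1)*x)) := by ring
  obtain ⟨MP, hMP⟩ : ∃ M, ∀ x ≥ (1:ℝ), |x^(d-1) * deriv G.phi x| ≤ M :=
    ⟨_, aux_W_bound hWp hwpc hgp hbp⟩
  obtain ⟨MS, hMS⟩ : ∃ M, ∀ x ≥ (1:ℝ), |x^(d-1) * deriv ψ x| ≤ M :=
    ⟨_, aux_W_bound hWψ hwψc hgψ hbψ⟩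
  set δ0 : ℝ := min (min δ1 δ2) (2*σ*δ1) with hδ0def
  have hδ0 : 0 < δ0 := by
    rw [hδ0def]
    exact lt_min (lt_min hδ1 hδ2) (by positivity)
  have hδ01 : δ0 ≤ δ1 := le_trans (min_le_left _ _) (min_le_left _ _)
  have hδ02 : δ0 ≤ δ2 := le_trans (min_le_left _ _) (min_le_right _ _)
  have hδ03 : δ0 ≤ 2*σ*δ1 := min_le_right _ _
  have hEmono : ∀ b c : ℝ, b ≤ c → ∀ x ≥ (0:ℝ), Real.exp (-c*x) ≤ Real.exp (-b*x) := by
    intro b c hbc x hx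
    apply Real.exp_le_exp.2
    nlinarith
  have hRb0 : ∀ x ≥ (0:ℝ), |G.R x| ≤ C1 * Real.exp (-δ0*x) := fun x hx =>
    le_trans (hRb x hx) (mul_le_mul_of_nonneg_left (hEmono δ0 δ1 hδ01 x hx) hC1.le)
  have hRb0' : ∀ x ≥ (0:ℝ), |deriv G.R x| ≤ C1 * Real.exp (-δ0*x) := fun x hx =>
    le_trans (hRb' x hx) (mul_le_mul_of_nonneg_left (hEmono δ0 δ1 hδ01 x hx) hC1.le)
  have hρb0 : ∀ x ≥ (0:ℝ), |ρ x| ≤ C2 * Real.exp (-δ0*x) := fun x hx =>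
    le_trans (hρb x hx) (mul_le_mul_of_nonneg_left (hEmono δ0 δ2 hδ02 x hx) hC2.le)
  have hρb0' : ∀ x ≥ (0:ℝ), |deriv ρ x| ≤ C2 * Real.exp (-δ0*x) := fun x hx =>
    le_trans (hρb' x hx) (mul_le_mul_of_nonneg_left (hEmono δ0 δ2 hδ02 x hx) hC2.le)
  have hR2σ0 : ∀ x ≥ (0:ℝ), G.R x ^ (2*σ) ≤ C1^(2*σ) * Real.exp (-δ0*x) := by
    intro x hx
    refine le_trans (hRpow (2*σ) (by positivity) x hx) ?_
    refine mul_le_mul_of_nonneg_left ?_ (Real.rpow_nonneg hC1.le _)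
    have := hEmono δ0 (2*σ*δ1) hδ03 x hx
    calc Real.exp (-(2*σ*δ1)*x) = Real.exp (-(2*σ*δ1)*x) := rfl
      _ ≤ Real.exp (-δ0*x) := by
          apply Real.exp_le_exp.2
          nlinarith
  have hEone : ∀ x ≥ (0:ℝ), Real.exp (-δ0*x) ≤ 1 := by
    intro x hx
    rw [Real.exp_le_one_iff]
    nlinarith
  -- T1 : first summand
  have hT1 : Filter.Tendsto (fun x => x^(d-1) * (deriv ρ x * ((d:ℝ)/2 * G.R x + x * deriv G.R x)
      - ρ x * (((d:ℝ)/2 + 1) * deriv G.R x + x * deriv (deriv G.R) x)))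
      Filter.atTop (nhds 0) := by
    set K1 : ℝ := C1*((d:ℝ)/2+1) with hK1def
    set K2 : ℝ := C1 + Mp*C1^(2*σ) + ((d:ℝ)-1)*C1 with hK2def
    set K3 : ℝ := ((d:ℝ)/2+1)*C1 + K2 with hK3def
    have hK1 : 0 ≤ K1 := by rw [hK1def]; positivity
    have hK2 : 0 ≤ K2 := by
      rw [hK2def]
      have : (0:ℝ) ≤ Mp*C1^(2*σ) := mul_nonneg hMp0 (Real.rpow_nonneg hC1.le _)
      nlinarith [hC1.le]
    have hK3 : 0 ≤ K3 := by rw [hK3def]; nlinarith [hC1.le]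
    refine aux_tend0 hδ0 ((d-1)+2) (C := C2*(K1+K3)) ?_
    filter_upwards [eventually_ge_atTop (1:ℝ)] with x hx1
    have hx0 : (0:ℝ) ≤ x := by linarith
    have hxpos : (0:ℝ) < x := by linarith
    have hEpos : (0:ℝ) < Real.exp (-δ0*x) := Real.exp_pos _
    have hE1 : Real.exp (-δ0*x) ≤ 1 := hEone x hx0
    have hΛb : |(d:ℝ)/2 * G.R x + x * deriv G.R x| ≤ K1 * (x * Real.exp (-δ0*x)) := by
      calc |(d:ℝ)/2 * G.R x + x * deriv G.R x| ≤ |(d:ℝ)/2 * G.R x| + |x * deriv G.R x| :=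
            abs_add_le _ _
        _ = (d:ℝ)/2 * |G.R x| + x * |deriv G.R x| := by
            rw [abs_mul, abs_mul, abs_of_nonneg (by positivity : (0:ℝ) ≤ (d:ℝ)/2),
              abs_of_nonneg hx0]
        _ ≤ (d:ℝ)/2 * (C1 * Real.exp (-δ0*x)) + x * (C1 * Real.exp (-δ0*x)) := by
            have h1 := hRb0 x hx0
            have h2 := hRb0' x hx0
            gcongr
        _ ≤ K1 * (x * Real.exp (-δ0*x)) := by
            rw [hK1def]
            nlinarith [mul_nonneg (mul_nonneg (mul_nonneg
              (by positivity : (0:ℝ) ≤ (d:ℝ)/2) hC1.le) hEpos.le)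
              (by linarith : (0:ℝ) ≤ x - 1)]
    have hxR2b : |x * deriv (deriv G.R) x| ≤ K2 * (x * Real.exp (-δ0*x)) := by
      rw [hXR2eq x hxpos]
      have h1 := hRb0 x hx0
      have h2 := hRb0' x hx0
      have h3 := hR2σ0 x hx0
      have h4 := hMpb x hx0
      calc |x * G.R x - x * (G.phi x * G.R x ^ (2*σ)) - ((d:ℝ)-1) * deriv G.R x|
          ≤ |x * G.R x| + |x * (G.phi x * G.R x ^ (2*σ))| + |((d:ℝ)-1) * deriv G.R x| := by
            refine le_trans (abs_sub _ _) ?_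
            have := abs_sub (x * G.R x) (x * (G.phi x * G.R x ^ (2*σ)))
            linarith
        _ = x * |G.R x| + x * (|G.phi x| * G.R x ^ (2*σ)) + ((d:ℝ)-1) * |deriv G.R x| := by
            rw [abs_mul, abs_mul, abs_mul, abs_mul, abs_of_nonneg hx0,
              abs_of_nonneg (by linarith : (0:ℝ) ≤ (d:ℝ)-1),
              abs_of_nonneg (Real.rpow_nonneg (G.R_pos x hx0).le _)]
        _ ≤ x * (C1 * Real.exp (-δ0*x)) + x * (Mp * (C1^(2*σ) * Real.exp (-δ0*x)))
            + ((d:ℝ)-1) * (C1 * Real.exp (-δ0*x)) := by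
            have h5 : |G.phi x| * G.R x ^ (2*σ) ≤ Mp * (C1^(2*σ) * Real.exp (-δ0*x)) :=
              mul_le_mul h4 h3 (Real.rpow_nonneg (G.R_pos x hx0).le _) hMp0
            gcongr <;> first | assumption | linarith
        _ ≤ K2 * (x * Real.exp (-δ0*x)) := by
            rw [hK2def]
            have hMpC : (0:ℝ) ≤ Mp * C1^(2*σ) := mul_nonneg hMp0 (Real.rpow_nonneg hC1.le _)
            nlinarith [mul_nonneg (mul_nonneg (mul_nonneg
              (by linarith : (0:ℝ) ≤ (d:ℝ)-1) hC1.le) hEpos.le)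
              (by linarith : (0:ℝ) ≤ x - 1)]
    have hΛ1b : |((d:ℝ)/2 + 1) * deriv G.R x + x * deriv (deriv G.R) x|
        ≤ K3 * (x * Real.exp (-δ0*x)) := by
      calc |((d:ℝ)/2 + 1) * deriv G.R x + x * deriv (deriv G.R) x|
          ≤ |((d:ℝ)/2 + 1) * deriv G.R x| + |x * deriv (deriv G.R) x| := abs_add_le _ _
        _ ≤ ((d:ℝ)/2 + 1) * (C1 * Real.exp (-δ0*x)) + K2 * (x * Real.exp (-δ0*x)) := by
            rw [abs_mul, abs_of_nonneg (by positivity : (0:ℝ) ≤ (d:ℝ)/2+1)]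
            have h2 := hRb0' x hx0
            gcongr
        _ ≤ K3 * (x * Real.exp (-δ0*x)) := by
            rw [hK3def]
            nlinarith [mul_nonneg (mul_nonneg (mul_nonneg
              (by positivity : (0:ℝ) ≤ (d:ℝ)/2+1) hC1.le) hEpos.le)
              (by linarith : (0:ℝ) ≤ x - 1)]
    have hq1 := hρb0' x hx0
    have hq0 := hρb0 x hx0
    calc |x^(d-1) * (deriv ρ x * ((d:ℝ)/2 * G.R x + x * deriv G.R x)
          - ρ x * (((d:ℝ)/2 + 1) * deriv G.R x + x * deriv (deriv G.R) x))|
        = x^(d-1) * |deriv ρ x * ((d:ℝ)/2 * G.R x + x * deriv G.R x)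
          - ρ x * (((d:ℝ)/2 + 1) * deriv G.R x + x * deriv (deriv G.R) x)| := by
          rw [abs_mul, abs_of_nonneg (pow_nonneg hx0 _)]
      _ ≤ x^(d-1) * ((C2 * Real.exp (-δ0*x)) * (K1 * (x * Real.exp (-δ0*x)))
          + (C2 * Real.exp (-δ0*x)) * (K3 * (x * Real.exp (-δ0*x)))) := by
          refine mul_le_mul_of_nonneg_left ?_ (pow_nonneg hx0 _)
          refine le_trans (abs_sub _ _) ?_
          rw [abs_mul, abs_mul]
          have m1 : |deriv ρ x| * |(d:ℝ)/2 * G.R x + x * deriv G.R x|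
              ≤ (C2 * Real.exp (-δ0*x)) * (K1 * (x * Real.exp (-δ0*x))) :=
            mul_le_mul hq1 hΛb (abs_nonneg _) (by positivity)
          have m2 : |ρ x| * |((d:ℝ)/2 + 1) * deriv G.R x + x * deriv (deriv G.R) x|
              ≤ (C2 * Real.exp (-δ0*x)) * (K3 * (x * Real.exp (-δ0*x))) :=
            mul_le_mul hq0 hΛ1b (abs_nonneg _) (by positivity)
          linarith
      _ = (C2*(K1+K3)) * ((x^(d-1) * x) * (Real.exp (-δ0*x) * Real.exp (-δ0*x))) := by ring
      _ ≤ (C2*(K1+K3)) * ((x^(d-1) * x) * (x * Real.exp (-δ0*x))) := by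
          have hEx : Real.exp (-δ0*x) * Real.exp (-δ0*x) ≤ x * Real.exp (-δ0*x) := by
            apply mul_le_mul_of_nonneg_right _ hEpos.le
            linarith
          refine mul_le_mul_of_nonneg_left ?_ (by positivity)
          exact mul_le_mul_of_nonneg_left hEx (by positivity)
      _ = (C2*(K1+K3)) * (x^((d-1)+2) * Real.exp (-δ0*x)) := by
          rw [pow_add]
          ring
  -- T2 : second summand
  have hxp'0 : Filter.Tendsto (fun x => x * deriv G.phi x) Filter.atTop (nhds 0) := by
    have hlim : Filter.Tendsto (fun x : ℝ => MP * x⁻¹) Filter.atTop (nhds 0) := by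
      simpa using tendsto_inv_atTop_zero.const_mul MP
    refine squeeze_zero_norm' ?_ hlim
    filter_upwards [eventually_ge_atTop (1:ℝ)] with x hx1
    have hx0 : (0:ℝ) < x := by linarith
    have hW := hMP x hx1
    have e1 : x^(d-1) = x^(d-2) * x := by
      rw [← pow_succ]; congr 1; omega
    have h2 : x^(d-2) * (x * |deriv G.phi x|) ≤ MP := by
      rw [abs_mul, abs_of_nonneg (pow_nonneg hx0.le _), e1] at hW
      calc x^(d-2) * (x * |deriv G.phi x|) = x^(d-2) * x * |deriv G.phi x| := by ring
        _ ≤ MP := hW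
    have h3 : x ≤ x^(d-2) := le_self_pow₀ hx1 (by omega)
    rw [Real.norm_eq_abs, abs_mul, abs_of_nonneg hx0.le]
    have h4 : x * (x * |deriv G.phi x|) ≤ MP :=
      le_trans (mul_le_mul_of_nonneg_right h3 (by positivity)) h2
    rw [show MP * x⁻¹ = MP / x from (div_eq_mul_inv MP x).symm, le_div_iff₀ hx0]
    calc x * |deriv G.phi x| * x = x * (x * |deriv G.phi x|) := by ring
      _ ≤ MP := h4
  have hTendh : Filter.Tendsto
      (fun x => ((2*σ+1)*((d:ℝ)/2) - 2) * G.phi x + x * deriv G.phi x)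
      Filter.atTop (nhds 0) := by
    have h1 := (G.phi_lim.const_mul ((2*σ+1)*((d:ℝ)/2) - 2)).add hxp'0
    simpa using h1
  have hBWψ' : ∀ᶠ x in Filter.atTop, |x^(d-1) * deriv ψ x| ≤ MS := by
    filter_upwards [eventually_ge_atTop (1:ℝ)] with x hx
    exact hMS x hx
  -- bound for x^(d-1) * h1fun
  have htendR1 : Filter.Tendsto (fun x : ℝ => x^(d-1) * (x * G.R x ^ (2*σ+1)))
      Filter.atTop (nhds 0) := by
    refine aux_tend0 (by positivity : (0:ℝ) < (2*σ+1)*δ1) ((d-1)+1) (C := C1^(2*σ+1)) ?_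
    filter_upwards [eventually_ge_atTop (0:ℝ)] with x hx0
    have h := hRpow (2*σ+1) (by positivity) x hx0
    have e1 : x^(d-1) * x = x^((d-1)+1) := by rw [pow_succ]
    rw [abs_mul, abs_of_nonneg (pow_nonneg hx0 _), abs_mul, abs_of_nonneg hx0,
      abs_of_nonneg (Real.rpow_nonneg (G.R_pos x hx0).le _)]
    calc x^(d-1) * (x * G.R x ^ (2*σ+1))
        ≤ x^(d-1) * (x * (C1^(2*σ+1) * Real.exp (-((2*σ+1)*δ1)*x))) := by
          refine mul_le_mul_of_nonneg_left ?_ (pow_nonneg hx0 _)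
          exact mul_le_mul_of_nonneg_left h hx0
      _ = C1^(2*σ+1) * ((x^(d-1) * x) * Real.exp (-((2*σ+1)*δ1)*x)) := by ring
      _ = C1^(2*σ+1) * (x^((d-1)+1) * Real.exp (-((2*σ+1)*δ1)*x)) := by rw [e1]
  have hev1 : ∀ᶠ x in Filter.atTop, |x^(d-1) * (x * G.R x ^ (2*σ+1))| ≤ 1 := by
    have := Filter.Tendsto.eventually_mem htendR1 (Metric.ball_mem_nhds (0:ℝ) one_pos)
    filter_upwards [this] with x hx
    have : |x^(d-1) * (x * G.R x ^ (2*σ+1))| < 1 := by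
      simpa only [Metric.mem_ball, Real.dist_0_eq_abs] using hx
    linarith
  have hBh1 : ∀ᶠ x in Filter.atTop, |x^(d-1) * ((((2*σ+1)*((d:ℝ)/2) - 2) + 1) * deriv G.phi x
      + x * deriv (deriv G.phi) x)|
      ≤ |(((2*σ+1)*((d:ℝ)/2) - 2) + 1)| * MP + (1 + ((d:ℝ)-1)*MP) := by
    filter_upwards [eventually_ge_atTop (1:ℝ), hev1] with x hx1 hx2
    have hxpos : (0:ℝ) < x := by linarith
    have e := hXP2eq x hxpos
    have heq : x^(d-1) * ((((2*σ+1)*((d:ℝ)/2) - 2) + 1) * deriv G.phi x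
        + x * deriv (deriv G.phi) x)
        = (((2*σ+1)*((d:ℝ)/2) - 2) + 1) * (x^(d-1) * deriv G.phi x)
          - x^(d-1) * (x * G.R x ^ (2*σ+1)) - ((d:ℝ)-1) * (x^(d-1) * deriv G.phi x) := by
      linear_combination x^(d-1) * e
    rw [heq]
    have hW := hMP x hx1
    have t1 : |(((2*σ+1)*((d:ℝ)/2) - 2) + 1) * (x^(d-1) * deriv G.phi x)|
        ≤ |(((2*σ+1)*((d:ℝ)/2) - 2) + 1)| * MP := by
      rw [abs_mul]
      exact mul_le_mul_of_nonneg_left hW (abs_nonneg _)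
    have t3 : |((d:ℝ)-1) * (x^(d-1) * deriv G.phi x)| ≤ ((d:ℝ)-1) * MP := by
      rw [abs_mul, abs_of_nonneg (by linarith : (0:ℝ) ≤ (d:ℝ)-1)]
      exact mul_le_mul_of_nonneg_left hW (by linarith)
    calc |(((2*σ+1)*((d:ℝ)/2) - 2) + 1) * (x^(d-1) * deriv G.phi x)
          - x^(d-1) * (x * G.R x ^ (2*σ+1)) - ((d:ℝ)-1) * (x^(d-1) * deriv G.phi x)|
        ≤ |(((2*σ+1)*((d:ℝ)/2) - 2) + 1) * (x^(d-1) * deriv G.phi x)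
          - x^(d-1) * (x * G.R x ^ (2*σ+1))| + |((d:ℝ)-1) * (x^(d-1) * deriv G.phi x)| :=
          abs_sub _ _
      _ ≤ |(((2*σ+1)*((d:ℝ)/2) - 2) + 1) * (x^(d-1) * deriv G.phi x)|
          + |x^(d-1) * (x * G.R x ^ (2*σ+1))| + |((d:ℝ)-1) * (x^(d-1) * deriv G.phi x)| := by
          have := abs_sub ((((2*σ+1)*((d:ℝ)/2) - 2) + 1) * (x^(d-1) * deriv G.phi x))
            (x^(d-1) * (x * G.R x ^ (2*σ+1)))
          linarith
      _ ≤ |(((2*σ+1)*((d:ℝ)/2) - 2) + 1)| * MP + (1 + ((d:ℝ)-1)*MP) := by linarith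
  have hT2 : Filter.Tendsto (fun x => x^(d-1) *
      (deriv ψ x * (((2*σ+1)*((d:ℝ)/2) - 2) * G.phi x + x * deriv G.phi x)
        - ψ x * ((((2*σ+1)*((d:ℝ)/2) - 2) + 1) * deriv G.phi x
          + x * deriv (deriv G.phi) x))) Filter.atTop (nhds 0) := by
    have p1 : Filter.Tendsto (fun x => (((2*σ+1)*((d:ℝ)/2) - 2) * G.phi x
        + x * deriv G.phi x) * (x^(d-1) * deriv ψ x)) Filter.atTop (nhds 0) :=
      aux_mul_zero hTendh hBWψ'
    have p2 : Filter.Tendsto (fun x => ψ x * (x^(d-1) * ((((2*σ+1)*((d:ℝ)/2) - 2) + 1)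
        * deriv G.phi x + x * deriv (deriv G.phi) x))) Filter.atTop (nhds 0) :=
      aux_mul_zero hψlim hBh1
    have h3 := p1.sub p2
    refine Filter.Tendsto.congr' ?_ (by simpa using h3)
    filter_upwards with x
    ring
  -- T3 : last summand
  have hT3 : Filter.Tendsto (fun x : ℝ => 1/8 * (x^(d-1) * (x^3 * G.R x^2)))
      Filter.atTop (nhds 0) := by
    refine aux_tend0 hδ1 ((d-1)+3) (C := C1^2/8) ?_
    filter_upwards [eventually_ge_atTop (0:ℝ)] with x hx0
    have h := hRsq x hx0
    have e1 : x^(d-1) * x^3 = x^((d-1)+3) := by rw [pow_add]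
    rw [abs_mul, abs_mul, abs_mul, abs_of_nonneg (pow_nonneg hx0 (d-1)),
      abs_of_nonneg (pow_nonneg hx0 3), abs_of_nonneg (sq_nonneg (G.R x))]
    have : |1/(8:ℝ)| = 1/8 := by norm_num
    rw [this]
    calc 1/8 * (x^(d-1) * (x^3 * G.R x^2))
        ≤ 1/8 * (x^(d-1) * (x^3 * (C1^2 * Real.exp (-δ1*x)))) := by
          refine mul_le_mul_of_nonneg_left ?_ (by norm_num)
          refine mul_le_mul_of_nonneg_left ?_ (pow_nonneg hx0 _)
          exact mul_le_mul_of_nonneg_left h (pow_nonneg hx0 _)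
      _ = C1^2/8 * ((x^(d-1) * x^3) * Real.exp (-δ1*x)) := by ring
      _ = C1^2/8 * (x^((d-1)+3) * Real.exp (-δ1*x)) := by rw [e1]
  have hFtop : Filter.Tendsto F Filter.atTop (nhds 0) := by
    rw [hFdef]
    unfold Ffun
    have := (hT1.add hT2).add hT3
    simpa using this
  have key : ∫ x in Set.Ioi (0:ℝ), (-2*((G.R x * ρ x - x^2/8*G.R x^2)*x^(d-1))) = 0 := by
    rw [MeasureTheory.integral_Ioi_of_hasDerivAt_of_tendsto hFcont hFderiv hFint hFtop,
      hF0, sub_zero]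
  calc ∫ ξ in Set.Ioi (0:ℝ), (G.R ξ * ρ ξ - ξ^2/8 * G.R ξ^2) * ξ^(d-1)
      = ∫ ξ in Set.Ioi (0:ℝ), (-1/2) * (-2*((G.R ξ * ρ ξ - ξ^2/8*G.R ξ^2)*ξ^(d-1))) := by
        congr 1; funext ξ; ring
    _ = (-1/2) * ∫ ξ in Set.Ioi (0:ℝ), (-2*((G.R ξ * ρ ξ - ξ^2/8*G.R ξ^2)*ξ^(d-1))) :=
        MeasureTheory.integral_const_mul _ _
    _ = 0 := by rw [key, mul_zero]
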